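/- Domination–separation lemma: In a domination digraph on n agents, if the agents can be partitioned into two nonempty groups G1 and G2 such that every agent in G2 dominates every agent in G1, then giving the entire remaining cake, divided envy-freely among the agents of G1, yields an envy-free allocation of the entire cake. -/

import Mathlib

open MeasureTheory Set
open scoped ENNReal

/-- Domination–separation lemma: given an envy-free partial allocation `X` with
remainder `R`, if the agents split into nonempty groups `G1`, `G2` with every agent of
`G2` dominating every agent of `G1`, then dividing the entire remainder envy-freely
among the agents of `G1` yields an envy-free allocation of the entire cake. -/
theorem domination_separation {α : Type*} [MeasurableSpace α] (n : ℕ)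
    (V : Fin n → Measure α) [∀ i, IsProbabilityMeasure (V i)]
    (X : Fin n → Set α) (hXmeas : ∀ i, MeasurableSet (X i))
    (hXdisj : Pairwise fun i j => Disjoint (X i) (X j))
    (R : Set α) (hRmeas : MeasurableSet R)
    (hR : R = univ \ ⋃ i, X i)
    (hXEF : ∀ i j : Fin n, V i (X j) ≤ V i (X i))
    (G1 G2 : Finset (Fin n)) (hG1 : G1.Nonempty) (hG2 : G2.Nonempty)
    (hdisjG : Disjoint G1 G2) (hcoverG : G1 ∪ G2 = Finset.univ)
    (hdom : ∀ i ∈ G2, ∀ j ∈ G1, V i (X j) + V i R ≤ V i (X i))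
    (Y : Fin n → Set α) (hYmeas : ∀ i, MeasurableSet (Y i))
    (hYsub : ∀ i, Y i ⊆ R) (hYG2 : ∀ i ∈ G2, Y i = ∅)
    (hYdisj : Pairwise fun i j => Disjoint (Y i) (Y j))
    (hYcover : (⋃ i, Y i) = R)
    (hYEF : ∀ i ∈ G1, ∀ j ∈ G1, V i (Y j) ≤ V i (Y i)) :
    ∀ i j : Fin n, V i (X j ∪ Y j) ≤ V i (X i ∪ Y i) := by
  have hXY : ∀ k l : Fin n, Disjoint (X k) (Y l) := by
    intro k l
    refine Set.disjoint_left.2 fun x hx hx' => ?_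
    have := hYsub l hx'
    rw [hR] at this
    exact this.2 (Set.mem_iUnion.2 ⟨k, hx⟩)
  have hunion : ∀ i k : Fin n, V i (X k ∪ Y k) = V i (X k) + V i (Y k) := by
    intro i k
    exact measure_union (hXY k k) (hYmeas k)
  intro i j
  rw [hunion, hunion]
  have hmem : ∀ k : Fin n, k ∈ G1 ∨ k ∈ G2 := by
    intro k
    have : k ∈ G1 ∪ G2 := by rw [hcoverG]; exact Finset.mem_univ k
    exact Finset.mem_union.1 this
  rcases hmem i with hi | hi
  · -- i ∈ G1
    rcases hmem j with hj | hj
    · exact add_le_add (hXEF i j) (hYEF i hi j hj)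
    · rw [hYG2 j hj]
      simp only [measure_empty, add_zero]
      exact le_trans (hXEF i j) le_self_add
  · -- i ∈ G2
    rw [hYG2 i hi]
    simp only [measure_empty, add_zero]
    rcases hmem j with hj | hj
    · calc V i (X j) + V i (Y j) ≤ V i (X j) + V i R :=
            add_le_add_right (measure_mono (hYsub j)) _
        _ ≤ V i (X i) := hdom i hi j hj
    · rw [hYG2 j hj]
      simp only [measure_empty, add_zero]
      exact hXEF i j
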